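/- arXiv:1909.04466 — 3 statements merged into one kernel-verified Lean document; each statement's English description precedes it below -/
import Mathlib

section
/- A linear map T from n×n complex matrices to m×m complex matrices is completely positive if and only if its Choi matrix, with entries T_{(j,l),(i,k)} = ⟨e_l^B, T(|e_i^A⟩⟨e_j^A|) e_k^B⟩ regarded as an operator on ℂ^n ⊗ ℂ^m, is positive semidefinite. -/
open scoped ComplexOrder

/-- The lift `T ⊗ id_N` of a linear map `T` on matrices, acting on block matrices
indexed by `Fin n × Fin N`. -/
noncomputable def liftMap (n m N : ℕ)
    (T : Matrix (Fin n) (Fin n) ℂ →ₗ[ℂ] Matrix (Fin m) (Fin m) ℂ)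
    (M : Matrix (Fin n × Fin N) (Fin n × Fin N) ℂ) :
    Matrix (Fin m × Fin N) (Fin m × Fin N) ℂ :=
  Matrix.of fun p q => T (Matrix.of fun a b => M (a, p.2) (b, q.2)) p.1 q.1

/-- `T` is completely positive: `T ⊗ id_N` preserves positive semidefiniteness
for every `N`. -/
def IsCompletelyPositive (n m : ℕ)
    (T : Matrix (Fin n) (Fin n) ℂ →ₗ[ℂ] Matrix (Fin m) (Fin m) ℂ) : Prop :=
  ∀ (N : ℕ) (M : Matrix (Fin n × Fin N) (Fin n × Fin N) ℂ),
    M.PosSemidef → (liftMap n m N T M).PosSemidef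

/-- The Choi matrix of `T`, the operator on `ℂ^n ⊗ ℂ^m` with entries
`C_{(i,k),(j,l)} = T(|e_i⟩⟨e_j|)_{k l}`. -/
noncomputable def choiMatrix (n m : ℕ)
    (T : Matrix (Fin n) (Fin n) ℂ →ₗ[ℂ] Matrix (Fin m) (Fin m) ℂ) :
    Matrix (Fin n × Fin m) (Fin n × Fin m) ℂ :=
  Matrix.of fun p q => T (Matrix.single p.1 q.1 1) p.2 q.2

open Matrix

open scoped MatrixOrder Matrix.Norms.L2Operator in
theorem Matrix.posSemidef_iff_eq_transpose_mul_self {n : Type*} [Fintype n] [DecidableEq n]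
    {A : Matrix n n ℂ} : A.PosSemidef ↔ ∃ B : Matrix n n ℂ, A = Bᴴ * B := by
  refine ⟨fun hA => ?_, fun ⟨B, hB⟩ => hB ▸ Matrix.posSemidef_conjTranspose_mul_self B⟩
  obtain ⟨B, hB⟩ := CStarAlgebra.nonneg_iff_eq_star_mul_self.mp hA.nonneg
  exact ⟨B, hB⟩

lemma T_expand {n m : ℕ} (T : Matrix (Fin n) (Fin n) ℂ →ₗ[ℂ] Matrix (Fin m) (Fin m) ℂ)
    (B : Matrix (Fin n) (Fin n) ℂ) (k l : Fin m) :
    T B k l = ∑ i, ∑ j, B i j * T (Matrix.single i j 1) k l := by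
  conv_lhs => rw [Matrix.matrix_eq_sum_single B]
  rw [map_sum, Matrix.sum_apply]
  refine Finset.sum_congr rfl fun i _ => ?_
  rw [map_sum, Matrix.sum_apply]
  refine Finset.sum_congr rfl fun j _ => ?_
  have : Matrix.single i j (B i j) = B i j • Matrix.single i j (1 : ℂ) := by
    rw [Matrix.smul_single, smul_eq_mul, mul_one]
  rw [this, _root_.map_smul, Matrix.smul_apply, smul_eq_mul]

lemma keysum {ι κ σ ρ : Type*} [Fintype ι] [Fintype κ] [Fintype σ] [Fintype ρ]
    (a : σ → ι → ℂ) (a' : σ → κ → ℂ) (d : ρ → ι → ℂ) (d' : ρ → κ → ℂ) :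
    ∑ i, ∑ j, (∑ s, (starRingEnd ℂ) (a s i) * a' s j) * (∑ r, (starRingEnd ℂ) (d r i) * d' r j)
      = ∑ r, ∑ s, (starRingEnd ℂ) (∑ i, a s i * d r i) * (∑ j, a' s j * d' r j) := by
  set g : ι → κ → σ → ρ → ℂ := fun i j s r =>
    ((starRingEnd ℂ) (a s i) * a' s j) * ((starRingEnd ℂ) (d r i) * d' r j) with hg
  calc
    ∑ i, ∑ j, (∑ s, (starRingEnd ℂ) (a s i) * a' s j) * (∑ r, (starRingEnd ℂ) (d r i) * d' r j)
        = ∑ i, ∑ j, ∑ s, ∑ r, g i j s r := by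
          refine Finset.sum_congr rfl fun i _ => Finset.sum_congr rfl fun j _ => ?_
          exact Finset.sum_mul_sum _ _ _ _
    _ = ∑ i, ∑ j, ∑ r, ∑ s, g i j s r := by
          refine Finset.sum_congr rfl fun i _ => Finset.sum_congr rfl fun j _ => ?_
          exact Finset.sum_comm
    _ = ∑ i, ∑ r, ∑ j, ∑ s, g i j s r := by
          refine Finset.sum_congr rfl fun i _ => ?_
          exact Finset.sum_comm
    _ = ∑ r, ∑ i, ∑ j, ∑ s, g i j s r := Finset.sum_comm
    _ = ∑ r, ∑ i, ∑ s, ∑ j, g i j s r := by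
          refine Finset.sum_congr rfl fun r _ => Finset.sum_congr rfl fun i _ => ?_
          exact Finset.sum_comm
    _ = ∑ r, ∑ s, ∑ i, ∑ j, g i j s r := by
          refine Finset.sum_congr rfl fun r _ => ?_
          exact Finset.sum_comm
    _ = ∑ r, ∑ s, (starRingEnd ℂ) (∑ i, a s i * d r i) * (∑ j, a' s j * d' r j) := by
          refine Finset.sum_congr rfl fun r _ => Finset.sum_congr rfl fun s _ => ?_
          rw [map_sum, Finset.sum_mul_sum]
          refine Finset.sum_congr rfl fun i _ => Finset.sum_congr rfl fun j _ => ?_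
          rw [_root_.map_mul, hg]
          ring

/-- Choi's theorem: a linear map between matrix algebras is completely positive iff
its Choi matrix is positive semidefinite. -/
theorem completely_positive_iff_choi_posSemidef (n m : ℕ)
    (T : Matrix (Fin n) (Fin n) ℂ →ₗ[ℂ] Matrix (Fin m) (Fin m) ℂ) :
    IsCompletelyPositive n m T ↔ (choiMatrix n m T).PosSemidef := by
  constructor
  · intro h
    set v : Matrix (Fin 1) (Fin n × Fin n) ℂ := Matrix.of fun _ p => if p.1 = p.2 then 1 else 0
      with hv
    have hlift := h n (vᴴ * v) (Matrix.posSemidef_conjTranspose_mul_self v)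
    have inner : ∀ i j : Fin n,
        (Matrix.of fun a b => (vᴴ * v) (a, i) (b, j)) = Matrix.single i j (1 : ℂ) := by
      intro i j
      ext a b
      simp [hv, Matrix.mul_apply, Matrix.conjTranspose_apply, Matrix.single, eq_comm,
        ite_and, and_comm]
      split_ifs <;> rfl
    have key : choiMatrix n m T = (liftMap n m n T (vᴴ * v)).submatrix Prod.swap Prod.swap := by
      ext p q
      simp only [choiMatrix, liftMap, Matrix.submatrix_apply, Matrix.of_apply, Prod.swap, inner]
    rw [key]
    exact hlift.submatrix Prod.swap
  · intro hC N M hM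
    obtain ⟨D, hD⟩ := Matrix.posSemidef_iff_eq_transpose_mul_self.mp hC
    obtain ⟨A, hA⟩ := Matrix.posSemidef_iff_eq_transpose_mul_self.mp hM
    set F : Matrix ((Fin n × Fin m) × (Fin n × Fin N)) (Fin m × Fin N) ℂ :=
      Matrix.of fun rs kp => ∑ i, A rs.2 (i, kp.2) * D rs.1 (i, kp.1) with hF
    have key : liftMap n m N T M = Fᴴ * F := by
      ext kp lq
      show T (Matrix.of fun a b => M (a, kp.2) (b, lq.2)) kp.1 lq.1 = _
      rw [T_expand]
      have hMe : ∀ i j : Fin n, (Matrix.of fun a b => M (a, kp.2) (b, lq.2)) i j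
          = ∑ s, (starRingEnd ℂ) (A s (i, kp.2)) * A s (j, lq.2) := by
        intro i j
        rw [Matrix.of_apply, hA]
        simp [Matrix.mul_apply, Matrix.conjTranspose_apply]
      have hCe : ∀ i j : Fin n, T (Matrix.single i j 1) kp.1 lq.1
          = ∑ r, (starRingEnd ℂ) (D r (i, kp.1)) * D r (j, lq.1) := by
        intro i j
        have h0 : T (Matrix.single i j 1) kp.1 lq.1
            = choiMatrix n m T (i, kp.1) (j, lq.1) := rfl
        rw [h0, hD]
        simp [Matrix.mul_apply, Matrix.conjTranspose_apply]
      simp only [hMe, hCe]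
      rw [Matrix.mul_apply]
      simp only [Matrix.conjTranspose_apply, hF, Matrix.of_apply, Matrix.star_apply]
      rw [Fintype.sum_prod_type]
      exact keysum (fun s i => A s (i, kp.2)) (fun s j => A s (j, lq.2))
        (fun r i => D r (i, kp.1)) (fun r j => D r (j, lq.1))
    rw [key]
    exact Matrix.posSemidef_conjTranspose_mul_self F
end

section
/- A linear map T from n×n matrices to m×m matrices is completely positive if and only if it is of positive type: for every N and all matrices b₁,...,b_N (n×n) and vectors x₁,...,x_N ∈ ℂ^m, one has Σ_{i,j} ⟨x_i, T(b_i* b_j) x_j⟩ ≥ 0. -/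
open scoped ComplexOrder
open Matrix

lemma aux_posSemidef {k : Type*} [Fintype k] [DecidableEq k] (A : Matrix k k ℂ)
    (h : ∀ x : k → ℂ, 0 ≤ dotProduct (star x) (A.mulVec x)) : A.PosSemidef := by
  refine Matrix.PosSemidef.of_dotProduct_mulVec_nonneg ?_ h
  rw [Matrix.isHermitian_iff_isSymmetric, LinearMap.isSymmetric_iff_inner_map_self_real]
  intro v
  have h1 : (inner ℂ (A.toEuclideanLin v) v : ℂ)
      = starRingEnd ℂ (dotProduct (star (WithLp.equiv 2 _ v)) (A.mulVec (WithLp.equiv 2 _ v))) := by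
    rw [EuclideanSpace.inner_eq_star_dotProduct]
    simp [dotProduct, Matrix.mulVec, map_sum, mul_comm]
  rw [h1]
  have h2 := h (WithLp.equiv 2 _ v)
  have h3 : IsSelfAdjoint (dotProduct (star (WithLp.equiv 2 _ v)) (A.mulVec (WithLp.equiv 2 _ v))) :=
    IsSelfAdjoint.of_nonneg h2
  rw [Complex.conj_conj]
  exact h3.symm

lemma sum_expand (m N : ℕ) (R : Fin N → Fin N → Matrix (Fin m) (Fin m) ℂ)
    (x : Fin m × Fin N → ℂ) :
    dotProduct (star x)
        ((Matrix.of fun p q : Fin m × Fin N => R p.2 q.2 p.1 q.1).mulVec x)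
      = ∑ i, ∑ j, dotProduct (star fun p => x (p, i))
          ((R i j).mulVec fun p => x (p, j)) := by
  simp only [dotProduct, Matrix.mulVec, Pi.star_apply, Matrix.of_apply,
    Fintype.sum_prod_type, Finset.mul_sum, Finset.sum_mul]
  rw [Finset.sum_comm]
  refine Finset.sum_congr rfl fun i _ => ?_
  rw [show (∑ p : Fin m, ∑ q : Fin m, ∑ j : Fin N,
      star (x (p, i)) * (R i j p q * x (q, j)))
      = ∑ p : Fin m, ∑ j : Fin N, ∑ q : Fin m,
      star (x (p, i)) * (R i j p q * x (q, j)) from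
    Finset.sum_congr rfl fun p _ => Finset.sum_comm ..]
  exact Finset.sum_comm ..


/-- A linear map between matrix algebras is completely positive iff it is of
positive type: `∑_{i,j} ⟨x_i, T(b_i* b_j) x_j⟩ ≥ 0` for all finite families of
matrices `b_i` and vectors `x_i`. -/
theorem completely_positive_iff_positive_type (n m : ℕ)
    (T : Matrix (Fin n) (Fin n) ℂ →ₗ[ℂ] Matrix (Fin m) (Fin m) ℂ) :
    IsCompletelyPositive n m T ↔
      ∀ (N : ℕ) (b : Fin N → Matrix (Fin n) (Fin n) ℂ) (x : Fin N → Fin m → ℂ),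
        0 ≤ ∑ i, ∑ j,
          dotProduct (star (x i))
            (Matrix.mulVec (T ((b i).conjTranspose * b j)) (x j)) := by
  constructor
  · intro hcp N b x
    set M : Matrix (Fin n × Fin N) (Fin n × Fin N) ℂ :=
      Matrix.of fun p q => ((b p.2)ᴴ * b q.2) p.1 q.1 with hMdef
    have hM : M.PosSemidef := by
      have : M = (Matrix.of fun (c : Fin n) (p : Fin n × Fin N) => b p.2 c p.1)ᴴ *
          (Matrix.of fun (c : Fin n) (p : Fin n × Fin N) => b p.2 c p.1) := by
        ext p q
        simp [hMdef, Matrix.mul_apply, Matrix.conjTranspose_apply]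
      rw [this]
      exact Matrix.posSemidef_conjTranspose_mul_self _
    have h := (hcp N M hM).dotProduct_mulVec_nonneg (fun p => x p.2 p.1)
    have hl : liftMap n m N T M
        = Matrix.of fun p q : Fin m × Fin N => (T ((b p.2)ᴴ * b q.2)) p.1 q.1 := rfl
    rw [hl, sum_expand m N (fun i j => T ((b i)ᴴ * b j)) (fun p => x p.2 p.1)] at h
    exact h
  · intro hpt N M hM
    rcases Nat.eq_zero_or_pos n with hn | hn
    · subst hn
      have : liftMap 0 m N T M = 0 := by
        ext p q
        show T (Matrix.of fun a b => M (a, p.2) (b, q.2)) p.1 q.1 = 0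
        rw [Subsingleton.elim (Matrix.of fun a b => M (a, p.2) (b, q.2)) (0 : Matrix (Fin 0) (Fin 0) ℂ)]
        simp
      rw [this]
      exact Matrix.PosSemidef.zero
    · obtain ⟨B, hB⟩ : ∃ B : Matrix (Fin n × Fin N) (Fin n × Fin N) ℂ, M = Bᴴ * B := by
        open scoped MatrixOrder in
        exact ⟨CFC.sqrt M, by rw [← Matrix.star_eq_conjTranspose,
          (CFC.sqrt_nonneg M).isSelfAdjoint.star_eq, CFC.sqrt_mul_sqrt_self M hM.nonneg]⟩
      set c0 : Fin n := ⟨0, hn⟩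
      set c : (Fin n × Fin N) → Fin N → Matrix (Fin n) (Fin n) ℂ :=
        fun w i => Matrix.of fun c' a => (if c' = c0 then 1 else 0) * B w (a, i) with hc
      have hblock : ∀ i j : Fin N, (Matrix.of fun a b => M ((a, i)) ((b, j)))
          = ∑ w : Fin n × Fin N, (c w i)ᴴ * (c w j) := by
        intro i j
        ext a b'
        rw [hB]
        simp only [Matrix.sum_apply, Matrix.mul_apply, Matrix.conjTranspose_apply, hc,
          Matrix.of_apply]
        refine Finset.sum_congr rfl fun w _ => ?_
        rw [Finset.sum_eq_single c0]
        · simp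
        · intro b'' _ hb; simp [hb]
        · simp
      apply aux_posSemidef
      intro y
      have hl : liftMap n m N T M
          = Matrix.of fun p q : Fin m × Fin N =>
              (T (Matrix.of fun a b => M ((a, p.2)) ((b, q.2)))) p.1 q.1 := rfl
      rw [hl, sum_expand m N (fun i j => T (Matrix.of fun a b => M ((a, i)) ((b, j)))) y]
      have key : ∀ i j : Fin N, T (Matrix.of fun a b => M ((a, i)) ((b, j)))
          = ∑ w : Fin n × Fin N, T ((c w i)ᴴ * (c w j)) := by
        intro i j; rw [hblock i j, map_sum]
      calc (0:ℂ) ≤ ∑ w : Fin n × Fin N, ∑ i, ∑ j,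
            dotProduct (star fun p => y (p, i))
              ((T ((c w i)ᴴ * (c w j))).mulVec fun p => y (p, j)) := by
            refine Finset.sum_nonneg fun w _ => hpt N (c w) (fun i p => y (p, i))
        _ = _ := by
            rw [Finset.sum_comm]
            refine Finset.sum_congr rfl fun i _ => ?_
            rw [Finset.sum_comm]
            refine Finset.sum_congr rfl fun j _ => ?_
            rw [key i j]
            have h1 : (∑ w : Fin n × Fin N, T ((c w i)ᴴ * c w j)).mulVec (fun p => y (p, j))
                = ∑ w : Fin n × Fin N, (T ((c w i)ᴴ * c w j)).mulVec (fun p => y (p, j)) := by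
              ext p
              simp only [Matrix.mulVec, dotProduct, Matrix.sum_apply, Finset.sum_mul,
                Finset.sum_apply]
              exact Finset.sum_comm ..
            rw [h1]
            simp only [dotProduct, Finset.sum_apply, Pi.star_apply, Finset.mul_sum]
            exact Finset.sum_comm ..
end

section
/- Consider the two-player EWL quantum game on ℂ²⊗ℂ² with maximally entangled initial state ψ_in = (|00⟩ + i|11⟩)/√2 and final state ξ_fin = J*(U₁⊗U₂)J|00⟩ where J = (I⊗I + i σ_x⊗σ_x)/√2. If both players use full SU(2) strategies, then for every U₂ ∈ SU(2) and every index pair (k,l) ∈ {0,1}², there exists U₁ ∈ SU(2) such that |⟨kl|ξ_fin⟩| = 1, i.e., the first player can force any of the four outcomes with probability 1 (and symmetrically for the second player). -/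
open Kronecker

noncomputable def sigmaX : Matrix (Fin 2) (Fin 2) ℂ := !![0, 1; 1, 0]

/-- The EWL entangling gate `J = (I⊗I + i σ_x⊗σ_x)/√2`. -/
noncomputable def ewlJ : Matrix (Fin 2 × Fin 2) (Fin 2 × Fin 2) ℂ :=
  (1 / (Real.sqrt 2 : ℂ)) •
    ((1 : Matrix (Fin 2 × Fin 2) (Fin 2 × Fin 2) ℂ) + Complex.I • (sigmaX ⊗ₖ sigmaX))

/-- The computational basis vector `|00⟩`. -/
noncomputable def ket00 : Fin 2 × Fin 2 → ℂ := fun p => if p = (0, 0) then 1 else 0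

/-- The EWL final state `ξ_fin = J* (U₁ ⊗ U₂) J |00⟩`. -/
noncomputable def ewlFinal (U₁ U₂ : Matrix (Fin 2) (Fin 2) ℂ) : Fin 2 × Fin 2 → ℂ :=
  Matrix.mulVec (ewlJ.conjTranspose * (U₁ ⊗ₖ U₂) * ewlJ) ket00

set_option maxHeartbeats 2000000 in
theorem ewlFinal_apply (U₁ U₂ : Matrix (Fin 2) (Fin 2) ℂ) (k l : Fin 2) :
    ewlFinal U₁ U₂ (k, l) =
      (1/2) * (U₁ k 0 * U₂ l 0 + Complex.I * (U₁ k 1 * U₂ l 1)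
        - Complex.I * (U₁ (1-k) 0 * U₂ (1-l) 0) + U₁ (1-k) 1 * U₂ (1-l) 1) := by
  have h2 : ((Real.sqrt 2 : ℂ))⁻¹ ^ 2 = 1 / 2 := by
    rw [sq, ← mul_inv, ← Complex.ofReal_mul, Real.mul_self_sqrt (by norm_num)]; norm_num
  fin_cases k <;> fin_cases l <;>
    simp [ewlFinal, ewlJ, sigmaX, ket00, Matrix.mulVec, Matrix.mul_apply, Fintype.sum_prod_type,
      Fin.sum_univ_two, Matrix.one_apply, dotProduct, Matrix.conjTranspose_apply,
      Prod.ext_iff] <;>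
    ring_nf <;>
    simp [h2, Complex.I_sq] <;> ring

lemma su2_entries {U : Matrix (Fin 2) (Fin 2) ℂ}
    (hU : U ∈ Matrix.specialUnitaryGroup (Fin 2) ℂ) :
    U 1 1 = starRingEnd ℂ (U 0 0) ∧ U 1 0 = -starRingEnd ℂ (U 0 1) ∧
    U 0 0 * starRingEnd ℂ (U 0 0) + U 0 1 * starRingEnd ℂ (U 0 1) = 1 := by
  obtain ⟨hu, hdet⟩ := Matrix.mem_specialUnitaryGroup_iff.mp hU
  have h1 : U * star U = 1 := Matrix.mem_unitaryGroup_iff.mp hu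
  have h2 : U * U.adjugate = 1 := by rw [Matrix.mul_adjugate, hdet, one_smul]
  have hst : star U = U.adjugate := by
    rw [← Matrix.inv_eq_right_inv h1, ← Matrix.inv_eq_right_inv h2]
  have hadj := Matrix.adjugate_fin_two U
  have e00 : (star U) 0 0 = U.adjugate 0 0 := by rw [hst]
  have e01 : (star U) 0 1 = U.adjugate 0 1 := by rw [hst]
  rw [hadj] at e00 e01
  simp [Matrix.star_apply] at e00 e01
  have h00 : (U * star U) 0 0 = (1 : Matrix (Fin 2) (Fin 2) ℂ) 0 0 := by rw [h1]
  simp [Matrix.mul_apply, Fin.sum_univ_two, Matrix.star_apply, Matrix.one_apply] at h00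
  refine ⟨?_, ?_, h00⟩
  · exact e00.symm
  · have := congrArg (starRingEnd ℂ) e01
    simpa using this

lemma su2_mk (p q : ℂ) (h : p * starRingEnd ℂ p + q * starRingEnd ℂ q = 1) :
    !![p, q; -starRingEnd ℂ q, starRingEnd ℂ p] ∈ Matrix.specialUnitaryGroup (Fin 2) ℂ := by
  rw [Matrix.mem_specialUnitaryGroup_iff]
  constructor
  · rw [Matrix.mem_unitaryGroup_iff]
    ext i j
    fin_cases i <;> fin_cases j <;>
      simp [Matrix.mul_apply, Fin.sum_univ_two, Matrix.star_apply, Matrix.one_apply] <;>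
      ring_nf <;> linear_combination h
  · rw [Matrix.det_fin_two]
    simp
    linear_combination h

lemma abs_eq_one_of_eq_one {x : ℂ} (h : x = 1) : ‖x‖ = 1 := by
  rw [h]; simp

lemma abs_eq_one_of_eq_I {x : ℂ} (h : x = Complex.I) : ‖x‖ = 1 := by
  rw [h, Complex.norm_I]

/-- In the maximally entangled EWL game with full `SU(2)` strategies, against any
strategy of the opponent, each player can force any of the four outcomes to occur
with probability `1`. -/
theorem ewl_each_player_can_force_any_outcome :
    (∀ U₂ ∈ Matrix.specialUnitaryGroup (Fin 2) ℂ, ∀ k l : Fin 2,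
        ∃ U₁ ∈ Matrix.specialUnitaryGroup (Fin 2) ℂ,
          ‖ewlFinal U₁ U₂ (k, l)‖ = 1) ∧
    (∀ U₁ ∈ Matrix.specialUnitaryGroup (Fin 2) ℂ, ∀ k l : Fin 2,
        ∃ U₂ ∈ Matrix.specialUnitaryGroup (Fin 2) ℂ,
          ‖ewlFinal U₁ U₂ (k, l)‖ = 1) := by
  constructor
  · intro U₂ hU₂ k l
    obtain ⟨h11, h10, hnorm⟩ := su2_entries hU₂
    fin_cases k <;> fin_cases l
    · refine ⟨_, su2_mk (starRingEnd ℂ (U₂ 0 0)) (-Complex.I * starRingEnd ℂ (U₂ 0 1)) (by simp [map_mul, Complex.conj_I]; ring_nf; simp only [Complex.I_sq]; ring_nf; linear_combination hnorm), ?_⟩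
      rw [ewlFinal_apply]
      apply abs_eq_one_of_eq_one
      simp [h10, h11, Complex.conj_I, map_mul]
      ring_nf
      try simp only [Complex.I_sq]
      try ring_nf
      linear_combination hnorm
    · refine ⟨_, su2_mk (-Complex.I * (U₂ 0 1)) (U₂ 0 0) (by simp [map_mul, Complex.conj_I]; ring_nf; simp only [Complex.I_sq]; ring_nf; linear_combination hnorm), ?_⟩
      rw [ewlFinal_apply]
      apply abs_eq_one_of_eq_I
      simp [h10, h11, Complex.conj_I, map_mul]
      ring_nf
      try simp only [Complex.I_sq]
      try ring_nf
      linear_combination Complex.I * hnorm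
    · refine ⟨_, su2_mk (U₂ 0 1) (Complex.I * (U₂ 0 0)) (by simp [map_mul, Complex.conj_I]; ring_nf; simp only [Complex.I_sq]; ring_nf; linear_combination hnorm), ?_⟩
      rw [ewlFinal_apply]
      apply abs_eq_one_of_eq_I
      simp [h10, h11, Complex.conj_I, map_mul]
      ring_nf
      try simp only [Complex.I_sq]
      try ring_nf
      linear_combination Complex.I * hnorm
    · refine ⟨_, su2_mk (Complex.I * starRingEnd ℂ (U₂ 0 0)) (starRingEnd ℂ (U₂ 0 1)) (by simp [map_mul, Complex.conj_I]; ring_nf; simp only [Complex.I_sq]; ring_nf; linear_combination hnorm), ?_⟩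
      rw [ewlFinal_apply]
      apply abs_eq_one_of_eq_one
      simp [h10, h11, Complex.conj_I, map_mul]
      ring_nf
      try simp only [Complex.I_sq]
      try ring_nf
      linear_combination hnorm
  · intro U₁ hU₁ k l
    obtain ⟨h11, h10, hnorm⟩ := su2_entries hU₁
    fin_cases k <;> fin_cases l
    · refine ⟨_, su2_mk (starRingEnd ℂ (U₁ 0 0)) (-Complex.I * starRingEnd ℂ (U₁ 0 1)) (by simp [map_mul, Complex.conj_I]; ring_nf; simp only [Complex.I_sq]; ring_nf; linear_combination hnorm), ?_⟩
      rw [ewlFinal_apply]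
      apply abs_eq_one_of_eq_one
      simp [h10, h11, Complex.conj_I, map_mul]
      ring_nf
      try simp only [Complex.I_sq]
      try ring_nf
      linear_combination hnorm
    · refine ⟨_, su2_mk (U₁ 0 1) (Complex.I * (U₁ 0 0)) (by simp [map_mul, Complex.conj_I]; ring_nf; simp only [Complex.I_sq]; ring_nf; linear_combination hnorm), ?_⟩
      rw [ewlFinal_apply]
      apply abs_eq_one_of_eq_I
      simp [h10, h11, Complex.conj_I, map_mul]
      ring_nf
      try simp only [Complex.I_sq]
      try ring_nf
      linear_combination Complex.I * hnorm
    · refine ⟨_, su2_mk (-Complex.I * (U₁ 0 1)) (U₁ 0 0) (by simp [map_mul, Complex.conj_I]; ring_nf; simp only [Complex.I_sq]; ring_nf; linear_combination hnorm), ?_⟩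
      rw [ewlFinal_apply]
      apply abs_eq_one_of_eq_I
      simp [h10, h11, Complex.conj_I, map_mul]
      ring_nf
      try simp only [Complex.I_sq]
      try ring_nf
      linear_combination Complex.I * hnorm
    · refine ⟨_, su2_mk (Complex.I * starRingEnd ℂ (U₁ 0 0)) (starRingEnd ℂ (U₁ 0 1)) (by simp [map_mul, Complex.conj_I]; ring_nf; simp only [Complex.I_sq]; ring_nf; linear_combination hnorm), ?_⟩
      rw [ewlFinal_apply]
      apply abs_eq_one_of_eq_one
      simp [h10, h11, Complex.conj_I, map_mul]
      ring_nf
      try simp only [Complex.I_sq]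
      try ring_nf
      linear_combination hnorm
end
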